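/- Let χ be a totally antisymmetric 3-tensor on ℝ⁷ and let a ∈ ℝ, ω ∈ ℝ⁷ and the traceless symmetric matrix h be its projection data, i.e. a = (1/42) Σ χ_{abc} φ₀_{abc}, ω_a = −(1/24) Σ χ_{mnp} ψ₀_{mnpa}, and h_{ab} = (3/4)[(1/2)(Σ χ_{mna} φ₀_{bmn} + Σ χ_{mnb} φ₀_{amn}) − (1/7) δ_{ab} Σ χ_{mnc} φ₀_{cmn}]. Then, with the norm of a 3-tensor ξ given by |ξ|² = (1/6) Σ_{a,b,c} (ξ_{abc})², the three projections satisfy: |π₁(χ)|² = |a φ₀|² = 7a², |π₇(χ)|² = |ω⌟ψ₀|² = 4 |ω|², and |π₂₇(χ)|² = |i_φ(h)|² = (2/9) |h|², where |ω|² = Σ_a (ω_a)² and |h|² = Σ_{a,b} (h_{ab})², and (ω⌟ψ₀)_{abc} = Σ_d ω_d ψ₀_{dabc}. -/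
import Mathlib


open scoped BigOperators

noncomputable section

/-- Kronecker delta `δ` on `Fin 7`. -/
def kd (a b : Fin 7) : ℝ := if a = b then 1 else 0

/-- The elementary alternating 3-tensor supported on permutations of `(i, j, k)`. -/
def trip (i j k a b c : Fin 7) : ℝ :=
  (if a = i ∧ b = j ∧ c = k then (1 : ℝ) else 0)
    + (if a = j ∧ b = k ∧ c = i then (1 : ℝ) else 0)
    + (if a = k ∧ b = i ∧ c = j then (1 : ℝ) else 0)
    - (if a = i ∧ b = k ∧ c = j then (1 : ℝ) else 0)
    - (if a = k ∧ b = j ∧ c = i then (1 : ℝ) else 0)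
    - (if a = j ∧ b = i ∧ c = k then (1 : ℝ) else 0)

/-- The standard `G₂` 3-form `φ₀` on `ℝ⁷`.  Indices `0, …, 6` correspond to the
paper's `1, …, 7`, so this is
`e^{123} + e^{145} + e^{167} + e^{246} - e^{257} - e^{347} - e^{356}`. -/
def phi0 (a b c : Fin 7) : ℝ :=
  trip 0 1 2 a b c + trip 0 3 4 a b c + trip 0 5 6 a b c + trip 1 3 5 a b c
    - trip 1 4 6 a b c - trip 2 3 6 a b c - trip 2 4 5 a b c

/-- The totally antisymmetric Levi-Civita symbol `ε̂` on seven indices,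
with `ε̂_{1234567} = 1`. -/
def eps7 (a b c d e f g : Fin 7) : ℝ :=
  if h : Function.Bijective ![a, b, c, d, e, f, g] then
    ((Equiv.Perm.sign (Equiv.ofBijective _ h) : ℤ) : ℝ)
  else 0

/-- The 4-form `ψ₀ = ⋆φ₀`, the Euclidean Hodge dual of `φ₀`:
`ψ₀ = e^{4567} + e^{2367} + e^{2345} + e^{1357} - e^{1346} - e^{1256} - e^{1247}`. -/
def psi0 (m n p q : Fin 7) : ℝ :=
  (1 / 6 : ℝ) * ∑ r, ∑ s, ∑ t, eps7 m n p q r s t * phi0 r s t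

/-- The map `i_φ` sending a symmetric matrix `h` to the 3-tensor
`i_φ(h)_{abc} = (1/3) Σ_d (h_{ad} φ₀_{dbc} + h_{bd} φ₀_{adc} + h_{cd} φ₀_{abd})`. -/
def iphi (h : Matrix (Fin 7) (Fin 7) ℝ) (a b c : Fin 7) : ℝ :=
  (1 / 3 : ℝ) * ∑ d, (h a d * phi0 d b c + h b d * phi0 a d c + h c d * phi0 a b d)

/-! ### Integer-valued tables and `decide`-checked facts -/

def kdZ (a b : Fin 7) : ℤ := if a = b then 1 else 0

def tripZ (i j k a b c : Fin 7) : ℤ :=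
  (if a = i ∧ b = j ∧ c = k then (1 : ℤ) else 0)
    + (if a = j ∧ b = k ∧ c = i then (1 : ℤ) else 0)
    + (if a = k ∧ b = i ∧ c = j then (1 : ℤ) else 0)
    - (if a = i ∧ b = k ∧ c = j then (1 : ℤ) else 0)
    - (if a = k ∧ b = j ∧ c = i then (1 : ℤ) else 0)
    - (if a = j ∧ b = i ∧ c = k then (1 : ℤ) else 0)

def phiZ (a b c : Fin 7) : ℤ :=
  tripZ 0 1 2 a b c + tripZ 0 3 4 a b c + tripZ 0 5 6 a b c + tripZ 1 3 5 a b c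
    - tripZ 1 4 6 a b c - tripZ 2 3 6 a b c - tripZ 2 4 5 a b c

def psiv : Fin 7 → Fin 7 → Fin 7 → Fin 7 → ℤ :=
  ![
  ![![![0, 0, 0, 0, 0, 0, 0], ![0, 0, 0, 0, 0, 0, 0], ![0, 0, 0, 0, 0, 0, 0], ![0, 0, 0, 0, 0, 0, 0], ![0, 0, 0, 0, 0, 0, 0], ![0, 0, 0, 0, 0, 0, 0], ![0, 0, 0, 0, 0, 0, 0]],
  ![![0, 0, 0, 0, 0, 0, 0], ![0, 0, 0, 0, 0, 0, 0], ![0, 0, 0, 0, 0, 0, 0], ![0, 0, 0, 0, 0, 0, -1], ![0, 0, 0, 0, 0, -1, 0], ![0, 0, 0, 0, 1, 0, 0], ![0, 0, 0, 1, 0, 0, 0]],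
  ![![0, 0, 0, 0, 0, 0, 0], ![0, 0, 0, 0, 0, 0, 0], ![0, 0, 0, 0, 0, 0, 0], ![0, 0, 0, 0, 0, -1, 0], ![0, 0, 0, 0, 0, 0, 1], ![0, 0, 0, 1, 0, 0, 0], ![0, 0, 0, 0, -1, 0, 0]],
  ![![0, 0, 0, 0, 0, 0, 0], ![0, 0, 0, 0, 0, 0, 1], ![0, 0, 0, 0, 0, 1, 0], ![0, 0, 0, 0, 0, 0, 0], ![0, 0, 0, 0, 0, 0, 0], ![0, 0, -1, 0, 0, 0, 0], ![0, -1, 0, 0, 0, 0, 0]],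
  ![![0, 0, 0, 0, 0, 0, 0], ![0, 0, 0, 0, 0, 1, 0], ![0, 0, 0, 0, 0, 0, -1], ![0, 0, 0, 0, 0, 0, 0], ![0, 0, 0, 0, 0, 0, 0], ![0, -1, 0, 0, 0, 0, 0], ![0, 0, 1, 0, 0, 0, 0]],
  ![![0, 0, 0, 0, 0, 0, 0], ![0, 0, 0, 0, -1, 0, 0], ![0, 0, 0, -1, 0, 0, 0], ![0, 0, 1, 0, 0, 0, 0], ![0, 1, 0, 0, 0, 0, 0], ![0, 0, 0, 0, 0, 0, 0], ![0, 0, 0, 0, 0, 0, 0]],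
  ![![0, 0, 0, 0, 0, 0, 0], ![0, 0, 0, -1, 0, 0, 0], ![0, 0, 0, 0, 1, 0, 0], ![0, 1, 0, 0, 0, 0, 0], ![0, 0, -1, 0, 0, 0, 0], ![0, 0, 0, 0, 0, 0, 0], ![0, 0, 0, 0, 0, 0, 0]]],
  ![![![0, 0, 0, 0, 0, 0, 0], ![0, 0, 0, 0, 0, 0, 0], ![0, 0, 0, 0, 0, 0, 0], ![0, 0, 0, 0, 0, 0, 1], ![0, 0, 0, 0, 0, 1, 0], ![0, 0, 0, 0, -1, 0, 0], ![0, 0, 0, -1, 0, 0, 0]],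
  ![![0, 0, 0, 0, 0, 0, 0], ![0, 0, 0, 0, 0, 0, 0], ![0, 0, 0, 0, 0, 0, 0], ![0, 0, 0, 0, 0, 0, 0], ![0, 0, 0, 0, 0, 0, 0], ![0, 0, 0, 0, 0, 0, 0], ![0, 0, 0, 0, 0, 0, 0]],
  ![![0, 0, 0, 0, 0, 0, 0], ![0, 0, 0, 0, 0, 0, 0], ![0, 0, 0, 0, 0, 0, 0], ![0, 0, 0, 0, 1, 0, 0], ![0, 0, 0, -1, 0, 0, 0], ![0, 0, 0, 0, 0, 0, 1], ![0, 0, 0, 0, 0, -1, 0]],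
  ![![0, 0, 0, 0, 0, 0, -1], ![0, 0, 0, 0, 0, 0, 0], ![0, 0, 0, 0, -1, 0, 0], ![0, 0, 0, 0, 0, 0, 0], ![0, 0, 1, 0, 0, 0, 0], ![0, 0, 0, 0, 0, 0, 0], ![1, 0, 0, 0, 0, 0, 0]],
  ![![0, 0, 0, 0, 0, -1, 0], ![0, 0, 0, 0, 0, 0, 0], ![0, 0, 0, 1, 0, 0, 0], ![0, 0, -1, 0, 0, 0, 0], ![0, 0, 0, 0, 0, 0, 0], ![1, 0, 0, 0, 0, 0, 0], ![0, 0, 0, 0, 0, 0, 0]],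
  ![![0, 0, 0, 0, 1, 0, 0], ![0, 0, 0, 0, 0, 0, 0], ![0, 0, 0, 0, 0, 0, -1], ![0, 0, 0, 0, 0, 0, 0], ![-1, 0, 0, 0, 0, 0, 0], ![0, 0, 0, 0, 0, 0, 0], ![0, 0, 1, 0, 0, 0, 0]],
  ![![0, 0, 0, 1, 0, 0, 0], ![0, 0, 0, 0, 0, 0, 0], ![0, 0, 0, 0, 0, 1, 0], ![-1, 0, 0, 0, 0, 0, 0], ![0, 0, 0, 0, 0, 0, 0], ![0, 0, -1, 0, 0, 0, 0], ![0, 0, 0, 0, 0, 0, 0]]],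
  ![![![0, 0, 0, 0, 0, 0, 0], ![0, 0, 0, 0, 0, 0, 0], ![0, 0, 0, 0, 0, 0, 0], ![0, 0, 0, 0, 0, 1, 0], ![0, 0, 0, 0, 0, 0, -1], ![0, 0, 0, -1, 0, 0, 0], ![0, 0, 0, 0, 1, 0, 0]],
  ![![0, 0, 0, 0, 0, 0, 0], ![0, 0, 0, 0, 0, 0, 0], ![0, 0, 0, 0, 0, 0, 0], ![0, 0, 0, 0, -1, 0, 0], ![0, 0, 0, 1, 0, 0, 0], ![0, 0, 0, 0, 0, 0, -1], ![0, 0, 0, 0, 0, 1, 0]],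
  ![![0, 0, 0, 0, 0, 0, 0], ![0, 0, 0, 0, 0, 0, 0], ![0, 0, 0, 0, 0, 0, 0], ![0, 0, 0, 0, 0, 0, 0], ![0, 0, 0, 0, 0, 0, 0], ![0, 0, 0, 0, 0, 0, 0], ![0, 0, 0, 0, 0, 0, 0]],
  ![![0, 0, 0, 0, 0, -1, 0], ![0, 0, 0, 0, 1, 0, 0], ![0, 0, 0, 0, 0, 0, 0], ![0, 0, 0, 0, 0, 0, 0], ![0, -1, 0, 0, 0, 0, 0], ![1, 0, 0, 0, 0, 0, 0], ![0, 0, 0, 0, 0, 0, 0]],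
  ![![0, 0, 0, 0, 0, 0, 1], ![0, 0, 0, -1, 0, 0, 0], ![0, 0, 0, 0, 0, 0, 0], ![0, 1, 0, 0, 0, 0, 0], ![0, 0, 0, 0, 0, 0, 0], ![0, 0, 0, 0, 0, 0, 0], ![-1, 0, 0, 0, 0, 0, 0]],
  ![![0, 0, 0, 1, 0, 0, 0], ![0, 0, 0, 0, 0, 0, 1], ![0, 0, 0, 0, 0, 0, 0], ![-1, 0, 0, 0, 0, 0, 0], ![0, 0, 0, 0, 0, 0, 0], ![0, 0, 0, 0, 0, 0, 0], ![0, -1, 0, 0, 0, 0, 0]],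
  ![![0, 0, 0, 0, -1, 0, 0], ![0, 0, 0, 0, 0, -1, 0], ![0, 0, 0, 0, 0, 0, 0], ![0, 0, 0, 0, 0, 0, 0], ![1, 0, 0, 0, 0, 0, 0], ![0, 1, 0, 0, 0, 0, 0], ![0, 0, 0, 0, 0, 0, 0]]],
  ![![![0, 0, 0, 0, 0, 0, 0], ![0, 0, 0, 0, 0, 0, -1], ![0, 0, 0, 0, 0, -1, 0], ![0, 0, 0, 0, 0, 0, 0], ![0, 0, 0, 0, 0, 0, 0], ![0, 0, 1, 0, 0, 0, 0], ![0, 1, 0, 0, 0, 0, 0]],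
  ![![0, 0, 0, 0, 0, 0, 1], ![0, 0, 0, 0, 0, 0, 0], ![0, 0, 0, 0, 1, 0, 0], ![0, 0, 0, 0, 0, 0, 0], ![0, 0, -1, 0, 0, 0, 0], ![0, 0, 0, 0, 0, 0, 0], ![-1, 0, 0, 0, 0, 0, 0]],
  ![![0, 0, 0, 0, 0, 1, 0], ![0, 0, 0, 0, -1, 0, 0], ![0, 0, 0, 0, 0, 0, 0], ![0, 0, 0, 0, 0, 0, 0], ![0, 1, 0, 0, 0, 0, 0], ![-1, 0, 0, 0, 0, 0, 0], ![0, 0, 0, 0, 0, 0, 0]],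
  ![![0, 0, 0, 0, 0, 0, 0], ![0, 0, 0, 0, 0, 0, 0], ![0, 0, 0, 0, 0, 0, 0], ![0, 0, 0, 0, 0, 0, 0], ![0, 0, 0, 0, 0, 0, 0], ![0, 0, 0, 0, 0, 0, 0], ![0, 0, 0, 0, 0, 0, 0]],
  ![![0, 0, 0, 0, 0, 0, 0], ![0, 0, 1, 0, 0, 0, 0], ![0, -1, 0, 0, 0, 0, 0], ![0, 0, 0, 0, 0, 0, 0], ![0, 0, 0, 0, 0, 0, 0], ![0, 0, 0, 0, 0, 0, 1], ![0, 0, 0, 0, 0, -1, 0]],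
  ![![0, 0, -1, 0, 0, 0, 0], ![0, 0, 0, 0, 0, 0, 0], ![1, 0, 0, 0, 0, 0, 0], ![0, 0, 0, 0, 0, 0, 0], ![0, 0, 0, 0, 0, 0, -1], ![0, 0, 0, 0, 0, 0, 0], ![0, 0, 0, 0, 1, 0, 0]],
  ![![0, -1, 0, 0, 0, 0, 0], ![1, 0, 0, 0, 0, 0, 0], ![0, 0, 0, 0, 0, 0, 0], ![0, 0, 0, 0, 0, 0, 0], ![0, 0, 0, 0, 0, 1, 0], ![0, 0, 0, 0, -1, 0, 0], ![0, 0, 0, 0, 0, 0, 0]]],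
  ![![![0, 0, 0, 0, 0, 0, 0], ![0, 0, 0, 0, 0, -1, 0], ![0, 0, 0, 0, 0, 0, 1], ![0, 0, 0, 0, 0, 0, 0], ![0, 0, 0, 0, 0, 0, 0], ![0, 1, 0, 0, 0, 0, 0], ![0, 0, -1, 0, 0, 0, 0]],
  ![![0, 0, 0, 0, 0, 1, 0], ![0, 0, 0, 0, 0, 0, 0], ![0, 0, 0, -1, 0, 0, 0], ![0, 0, 1, 0, 0, 0, 0], ![0, 0, 0, 0, 0, 0, 0], ![-1, 0, 0, 0, 0, 0, 0], ![0, 0, 0, 0, 0, 0, 0]],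
  ![![0, 0, 0, 0, 0, 0, -1], ![0, 0, 0, 1, 0, 0, 0], ![0, 0, 0, 0, 0, 0, 0], ![0, -1, 0, 0, 0, 0, 0], ![0, 0, 0, 0, 0, 0, 0], ![0, 0, 0, 0, 0, 0, 0], ![1, 0, 0, 0, 0, 0, 0]],
  ![![0, 0, 0, 0, 0, 0, 0], ![0, 0, -1, 0, 0, 0, 0], ![0, 1, 0, 0, 0, 0, 0], ![0, 0, 0, 0, 0, 0, 0], ![0, 0, 0, 0, 0, 0, 0], ![0, 0, 0, 0, 0, 0, -1], ![0, 0, 0, 0, 0, 1, 0]],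
  ![![0, 0, 0, 0, 0, 0, 0], ![0, 0, 0, 0, 0, 0, 0], ![0, 0, 0, 0, 0, 0, 0], ![0, 0, 0, 0, 0, 0, 0], ![0, 0, 0, 0, 0, 0, 0], ![0, 0, 0, 0, 0, 0, 0], ![0, 0, 0, 0, 0, 0, 0]],
  ![![0, -1, 0, 0, 0, 0, 0], ![1, 0, 0, 0, 0, 0, 0], ![0, 0, 0, 0, 0, 0, 0], ![0, 0, 0, 0, 0, 0, 1], ![0, 0, 0, 0, 0, 0, 0], ![0, 0, 0, 0, 0, 0, 0], ![0, 0, 0, -1, 0, 0, 0]],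
  ![![0, 0, 1, 0, 0, 0, 0], ![0, 0, 0, 0, 0, 0, 0], ![-1, 0, 0, 0, 0, 0, 0], ![0, 0, 0, 0, 0, -1, 0], ![0, 0, 0, 0, 0, 0, 0], ![0, 0, 0, 1, 0, 0, 0], ![0, 0, 0, 0, 0, 0, 0]]],
  ![![![0, 0, 0, 0, 0, 0, 0], ![0, 0, 0, 0, 1, 0, 0], ![0, 0, 0, 1, 0, 0, 0], ![0, 0, -1, 0, 0, 0, 0], ![0, -1, 0, 0, 0, 0, 0], ![0, 0, 0, 0, 0, 0, 0], ![0, 0, 0, 0, 0, 0, 0]],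
  ![![0, 0, 0, 0, -1, 0, 0], ![0, 0, 0, 0, 0, 0, 0], ![0, 0, 0, 0, 0, 0, 1], ![0, 0, 0, 0, 0, 0, 0], ![1, 0, 0, 0, 0, 0, 0], ![0, 0, 0, 0, 0, 0, 0], ![0, 0, -1, 0, 0, 0, 0]],
  ![![0, 0, 0, -1, 0, 0, 0], ![0, 0, 0, 0, 0, 0, -1], ![0, 0, 0, 0, 0, 0, 0], ![1, 0, 0, 0, 0, 0, 0], ![0, 0, 0, 0, 0, 0, 0], ![0, 0, 0, 0, 0, 0, 0], ![0, 1, 0, 0, 0, 0, 0]],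
  ![![0, 0, 1, 0, 0, 0, 0], ![0, 0, 0, 0, 0, 0, 0], ![-1, 0, 0, 0, 0, 0, 0], ![0, 0, 0, 0, 0, 0, 0], ![0, 0, 0, 0, 0, 0, 1], ![0, 0, 0, 0, 0, 0, 0], ![0, 0, 0, 0, -1, 0, 0]],
  ![![0, 1, 0, 0, 0, 0, 0], ![-1, 0, 0, 0, 0, 0, 0], ![0, 0, 0, 0, 0, 0, 0], ![0, 0, 0, 0, 0, 0, -1], ![0, 0, 0, 0, 0, 0, 0], ![0, 0, 0, 0, 0, 0, 0], ![0, 0, 0, 1, 0, 0, 0]],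
  ![![0, 0, 0, 0, 0, 0, 0], ![0, 0, 0, 0, 0, 0, 0], ![0, 0, 0, 0, 0, 0, 0], ![0, 0, 0, 0, 0, 0, 0], ![0, 0, 0, 0, 0, 0, 0], ![0, 0, 0, 0, 0, 0, 0], ![0, 0, 0, 0, 0, 0, 0]],
  ![![0, 0, 0, 0, 0, 0, 0], ![0, 0, 1, 0, 0, 0, 0], ![0, -1, 0, 0, 0, 0, 0], ![0, 0, 0, 0, 1, 0, 0], ![0, 0, 0, -1, 0, 0, 0], ![0, 0, 0, 0, 0, 0, 0], ![0, 0, 0, 0, 0, 0, 0]]],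
  ![![![0, 0, 0, 0, 0, 0, 0], ![0, 0, 0, 1, 0, 0, 0], ![0, 0, 0, 0, -1, 0, 0], ![0, -1, 0, 0, 0, 0, 0], ![0, 0, 1, 0, 0, 0, 0], ![0, 0, 0, 0, 0, 0, 0], ![0, 0, 0, 0, 0, 0, 0]],
  ![![0, 0, 0, -1, 0, 0, 0], ![0, 0, 0, 0, 0, 0, 0], ![0, 0, 0, 0, 0, -1, 0], ![1, 0, 0, 0, 0, 0, 0], ![0, 0, 0, 0, 0, 0, 0], ![0, 0, 1, 0, 0, 0, 0], ![0, 0, 0, 0, 0, 0, 0]],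
  ![![0, 0, 0, 0, 1, 0, 0], ![0, 0, 0, 0, 0, 1, 0], ![0, 0, 0, 0, 0, 0, 0], ![0, 0, 0, 0, 0, 0, 0], ![-1, 0, 0, 0, 0, 0, 0], ![0, -1, 0, 0, 0, 0, 0], ![0, 0, 0, 0, 0, 0, 0]],
  ![![0, 1, 0, 0, 0, 0, 0], ![-1, 0, 0, 0, 0, 0, 0], ![0, 0, 0, 0, 0, 0, 0], ![0, 0, 0, 0, 0, 0, 0], ![0, 0, 0, 0, 0, -1, 0], ![0, 0, 0, 0, 1, 0, 0], ![0, 0, 0, 0, 0, 0, 0]],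
  ![![0, 0, -1, 0, 0, 0, 0], ![0, 0, 0, 0, 0, 0, 0], ![1, 0, 0, 0, 0, 0, 0], ![0, 0, 0, 0, 0, 1, 0], ![0, 0, 0, 0, 0, 0, 0], ![0, 0, 0, -1, 0, 0, 0], ![0, 0, 0, 0, 0, 0, 0]],
  ![![0, 0, 0, 0, 0, 0, 0], ![0, 0, -1, 0, 0, 0, 0], ![0, 1, 0, 0, 0, 0, 0], ![0, 0, 0, 0, -1, 0, 0], ![0, 0, 0, 1, 0, 0, 0], ![0, 0, 0, 0, 0, 0, 0], ![0, 0, 0, 0, 0, 0, 0]],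
  ![![0, 0, 0, 0, 0, 0, 0], ![0, 0, 0, 0, 0, 0, 0], ![0, 0, 0, 0, 0, 0, 0], ![0, 0, 0, 0, 0, 0, 0], ![0, 0, 0, 0, 0, 0, 0], ![0, 0, 0, 0, 0, 0, 0], ![0, 0, 0, 0, 0, 0, 0]]]]

theorem Z1 : ∀ a b c : Fin 7, phiZ b a c = - phiZ a b c := by decide
theorem Z2 : ∀ a b c : Fin 7, phiZ a c b = - phiZ a b c := by decide
theorem Z3 : (∑ a, ∑ b, ∑ c, phiZ a b c * phiZ a b c) = 42 := by decide
theorem Z4 : ∀ e d : Fin 7, (∑ b, ∑ c, phiZ e b c * phiZ d b c) = 6 * kdZ e d := by decide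

set_option maxHeartbeats 2000000 in
theorem Z5 : ∀ a d b e : Fin 7,
    (∑ c, phiZ a e c * phiZ d b c) + (∑ c, phiZ d e c * phiZ a b c)
      + (∑ c, phiZ a b c * phiZ d e c) + (∑ c, phiZ d b c * phiZ a e c)
    = -2 * kdZ a b * kdZ d e - 2 * kdZ a e * kdZ d b + 4 * kdZ a d * kdZ b e := by decide

set_option maxHeartbeats 2000000 in
theorem Z6 : ∀ a d c e : Fin 7,
    (∑ b, phiZ a b e * phiZ d b c) + (∑ b, phiZ d b e * phiZ a b c)
      + (∑ b, phiZ a b c * phiZ d b e) + (∑ b, phiZ d b c * phiZ a b e)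
    = -2 * kdZ a c * kdZ d e - 2 * kdZ a e * kdZ d c + 4 * kdZ a d * kdZ c e := by decide

set_option maxHeartbeats 10000000 in
theorem Z7 : ∀ d e : Fin 7, (∑ a, ∑ b, ∑ c, psiv d a b c * psiv e a b c) = 24 * kdZ d e := by
  decide

/-! ### A computable version of `eps7` -/

def dist7 (a b c d e f g : Fin 7) : Prop :=
  a≠b ∧ a≠c ∧ a≠d ∧ a≠e ∧ a≠f ∧ a≠g ∧ b≠c ∧ b≠d ∧ b≠e ∧ b≠f ∧ b≠g ∧
  c≠d ∧ c≠e ∧ c≠f ∧ c≠g ∧ d≠e ∧ d≠f ∧ d≠g ∧ e≠f ∧ e≠g ∧ f≠g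

instance (a b c d e f g : Fin 7) : Decidable (dist7 a b c d e f g) := by
  unfold dist7; infer_instance

lemma dist7_bij {a b c d e f g : Fin 7} (h : dist7 a b c d e f g) :
    Function.Bijective ![a, b, c, d, e, f, g] := by
  rw [Fintype.bijective_iff_injective_and_card]
  refine ⟨?_, rfl⟩
  rw [← List.nodup_ofFn]
  obtain ⟨h1,h2,h3,h4,h5,h6,h7,h8,h9,h10,h11,h12,h13,h14,h15,h16,h17,h18,h19,h20,h21⟩ := h
  simp [List.ofFn_succ, Matrix.cons_val_zero, Matrix.cons_val_succ]
  tauto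

lemma bij_dist7 {a b c d e f g : Fin 7} (hb : Function.Bijective ![a, b, c, d, e, f, g]) :
    dist7 a b c d e f g := by
  have key : ∀ i j : Fin 7, i ≠ j → ¬ (![a,b,c,d,e,f,g] i = ![a,b,c,d,e,f,g] j) :=
    fun i j hij hEq => hij (hb.injective hEq)
  exact ⟨key 0 1 (by decide), key 0 2 (by decide), key 0 3 (by decide), key 0 4 (by decide),
    key 0 5 (by decide), key 0 6 (by decide), key 1 2 (by decide), key 1 3 (by decide),
    key 1 4 (by decide), key 1 5 (by decide), key 1 6 (by decide), key 2 3 (by decide),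
    key 2 4 (by decide), key 2 5 (by decide), key 2 6 (by decide), key 3 4 (by decide),
    key 3 5 (by decide), key 3 6 (by decide), key 4 5 (by decide), key 4 6 (by decide),
    key 5 6 (by decide)⟩

def eps7'' (a b c d e f g : Fin 7) : ℤ :=
  if h : dist7 a b c d e f g then
    ((Equiv.Perm.sign ⟨![a,b,c,d,e,f,g], Fintype.bijInv (dist7_bij h),
        Fintype.leftInverse_bijInv _, Fintype.rightInverse_bijInv _⟩ : ℤˣ) : ℤ)
  else 0

def psi6 (m n p q : Fin 7) : ℤ :=
  eps7'' m n p q 0 1 2 + eps7'' m n p q 0 3 4 + eps7'' m n p q 0 5 6 + eps7'' m n p q 1 3 5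
    - eps7'' m n p q 1 4 6 - eps7'' m n p q 2 3 6 - eps7'' m n p q 2 4 5

set_option maxHeartbeats 10000000 in
theorem Z8 : ∀ m n p q : Fin 7, psi6 m n p q = psiv m n p q := by decide

lemma eps7_cast (a b c d e f g : Fin 7) :
    eps7 a b c d e f g = ((eps7'' a b c d e f g : ℤ) : ℝ) := by
  unfold eps7 eps7''
  by_cases hd : dist7 a b c d e f g
  · rw [dif_pos hd, dif_pos (dist7_bij hd)]
    have : Equiv.ofBijective _ (dist7_bij hd)
        = (⟨![a,b,c,d,e,f,g], Fintype.bijInv (dist7_bij hd),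
            Fintype.leftInverse_bijInv _, Fintype.rightInverse_bijInv _⟩ :
          Equiv.Perm (Fin 7)) := Equiv.ext fun x => rfl
    rw [this]
  · rw [dif_neg hd, dif_neg (fun hb => hd (bij_dist7 hb))]
    norm_num

/-! ### Casts -/

lemma kd_cast (a b : Fin 7) : kd a b = ((kdZ a b : ℤ) : ℝ) := by
  unfold kd kdZ; split <;> norm_num

lemma trip_cast (i j k a b c : Fin 7) : trip i j k a b c = ((tripZ i j k a b c : ℤ) : ℝ) := by
  unfold trip tripZ
  push_cast [apply_ite (fun z : ℤ => (z : ℝ))]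
  ring

lemma phi_cast (a b c : Fin 7) : phi0 a b c = ((phiZ a b c : ℤ) : ℝ) := by
  unfold phi0 phiZ
  push_cast [← trip_cast]
  ring

/-! ### Antisymmetry of `eps7` in its last three arguments -/

def epsV (v : Fin 7 → Fin 7) : ℝ :=
  if h : Function.Bijective v then
    ((Equiv.Perm.sign (Equiv.ofBijective _ h) : ℤ) : ℝ)
  else 0

lemma eps7_epsV (a b c d e f g : Fin 7) : eps7 a b c d e f g = epsV ![a,b,c,d,e,f,g] := rfl

lemma epsV_swap (v : Fin 7 → Fin 7) (i j : Fin 7) (hij : i ≠ j) :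
    epsV (v ∘ Equiv.swap i j) = - epsV v := by
  unfold epsV
  by_cases hv : Function.Bijective v
  · have hw : Function.Bijective (v ∘ Equiv.swap i j) := (Equiv.bijective_comp _ v).mpr hv
    rw [dif_pos hw, dif_pos hv]
    have h2 : Equiv.ofBijective _ hw
        = (Equiv.ofBijective v hv) * (Equiv.swap i j) := Equiv.ext fun x => rfl
    rw [h2, Equiv.Perm.sign_mul, Equiv.Perm.sign_swap hij]
    push_cast
    ring
  · have hw : ¬ Function.Bijective (v ∘ Equiv.swap i j) := by
      rw [Equiv.bijective_comp]; exact hv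
    rw [dif_neg hw, dif_neg hv, neg_zero]

lemma vec_swap56 (a b c d e f g : Fin 7) :
    ![a,b,c,d,e,g,f] = ![a,b,c,d,e,f,g] ∘ Equiv.swap (5:Fin 7) 6 := by
  funext x; fin_cases x <;> rfl

lemma vec_swap45 (a b c d e f g : Fin 7) :
    ![a,b,c,d,f,e,g] = ![a,b,c,d,e,f,g] ∘ Equiv.swap (4:Fin 7) 5 := by
  funext x; fin_cases x <;> rfl

lemma vec_swap46 (a b c d e f g : Fin 7) :
    ![a,b,c,d,g,f,e] = ![a,b,c,d,e,f,g] ∘ Equiv.swap (4:Fin 7) 6 := by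
  funext x; fin_cases x <;> rfl

lemma eps7_swap56 (a b c d e f g : Fin 7) : eps7 a b c d e g f = - eps7 a b c d e f g := by
  rw [eps7_epsV, eps7_epsV, vec_swap56, epsV_swap _ _ _ (by decide)]

lemma eps7_swap45 (a b c d e f g : Fin 7) : eps7 a b c d f e g = - eps7 a b c d e f g := by
  rw [eps7_epsV, eps7_epsV, vec_swap45, epsV_swap _ _ _ (by decide)]

lemma eps7_swap46 (a b c d e f g : Fin 7) : eps7 a b c d g f e = - eps7 a b c d e f g := by
  rw [eps7_epsV, eps7_epsV, vec_swap46, epsV_swap _ _ _ (by decide)]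

/-! ### Evaluating `psi0` -/

lemma sum_ind (f : Fin 7 → Fin 7 → Fin 7 → ℝ) (i j k : Fin 7) :
    (∑ r, ∑ s, ∑ t, f r s t * (if r = i ∧ s = j ∧ t = k then (1:ℝ) else 0)) = f i j k := by
  have : ∀ r s t : Fin 7, (f r s t * (if r = i ∧ s = j ∧ t = k then (1:ℝ) else 0))
      = if r = i then (if s = j then (if t = k then f r s t else 0) else 0) else 0 := by
    intro r s t
    split_ifs <;> simp_all
  simp only [this]
  simp [Finset.sum_ite_eq']

lemma sum_trip (f : Fin 7 → Fin 7 → Fin 7 → ℝ) (i j k : Fin 7) :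
    (∑ r, ∑ s, ∑ t, f r s t * trip i j k r s t)
      = f i j k + f j k i + f k i j - f i k j - f k j i - f j i k := by
  have : ∀ r s t : Fin 7, f r s t * trip i j k r s t
      = f r s t * (if r = i ∧ s = j ∧ t = k then (1:ℝ) else 0)
        + f r s t * (if r = j ∧ s = k ∧ t = i then (1:ℝ) else 0)
        + f r s t * (if r = k ∧ s = i ∧ t = j then (1:ℝ) else 0)
        - f r s t * (if r = i ∧ s = k ∧ t = j then (1:ℝ) else 0)
        - f r s t * (if r = k ∧ s = j ∧ t = i then (1:ℝ) else 0)
        - f r s t * (if r = j ∧ s = i ∧ t = k then (1:ℝ) else 0) := by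
    intro r s t; unfold trip; ring
  simp only [this, Finset.sum_add_distrib, Finset.sum_sub_distrib]
  rw [sum_ind, sum_ind, sum_ind, sum_ind, sum_ind, sum_ind]

lemma trip_group (m n p q i j k : Fin 7) :
    eps7 m n p q i j k + eps7 m n p q j k i + eps7 m n p q k i j
      - eps7 m n p q i k j - eps7 m n p q k j i - eps7 m n p q j i k
    = 6 * eps7 m n p q i j k := by
  have h1 : eps7 m n p q j k i = eps7 m n p q i j k := by
    rw [eps7_swap46 m n p q i k j, eps7_swap56 m n p q i j k]; ring
  have h2 : eps7 m n p q k i j = eps7 m n p q i j k := by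
    rw [eps7_swap45 m n p q i k j, eps7_swap56 m n p q i j k]; ring
  have h3 : eps7 m n p q i k j = - eps7 m n p q i j k := eps7_swap56 m n p q i j k
  have h4 : eps7 m n p q k j i = - eps7 m n p q i j k := eps7_swap46 m n p q i j k
  have h5 : eps7 m n p q j i k = - eps7 m n p q i j k := eps7_swap45 m n p q i j k
  rw [h1, h2, h3, h4, h5]; ring

lemma psi0_expand (m n p q : Fin 7) :
    psi0 m n p q = eps7 m n p q 0 1 2 + eps7 m n p q 0 3 4 + eps7 m n p q 0 5 6
      + eps7 m n p q 1 3 5 - eps7 m n p q 1 4 6 - eps7 m n p q 2 3 6 - eps7 m n p q 2 4 5 := by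
  unfold psi0
  have expand : ∀ r s t : Fin 7, eps7 m n p q r s t * phi0 r s t
      = eps7 m n p q r s t * trip 0 1 2 r s t + eps7 m n p q r s t * trip 0 3 4 r s t
        + eps7 m n p q r s t * trip 0 5 6 r s t + eps7 m n p q r s t * trip 1 3 5 r s t
        - eps7 m n p q r s t * trip 1 4 6 r s t - eps7 m n p q r s t * trip 2 3 6 r s t
        - eps7 m n p q r s t * trip 2 4 5 r s t := by
    intro r s t; unfold phi0; ring
  simp only [expand, Finset.sum_add_distrib, Finset.sum_sub_distrib]
  rw [sum_trip (fun r s t => eps7 m n p q r s t) 0 1 2,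
      sum_trip (fun r s t => eps7 m n p q r s t) 0 3 4,
      sum_trip (fun r s t => eps7 m n p q r s t) 0 5 6,
      sum_trip (fun r s t => eps7 m n p q r s t) 1 3 5,
      sum_trip (fun r s t => eps7 m n p q r s t) 1 4 6,
      sum_trip (fun r s t => eps7 m n p q r s t) 2 3 6,
      sum_trip (fun r s t => eps7 m n p q r s t) 2 4 5]
  have g1 := trip_group m n p q 0 1 2
  have g2 := trip_group m n p q 0 3 4
  have g3 := trip_group m n p q 0 5 6
  have g4 := trip_group m n p q 1 3 5
  have g5 := trip_group m n p q 1 4 6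
  have g6 := trip_group m n p q 2 3 6
  have g7 := trip_group m n p q 2 4 5
  linarith

lemma psi_cast (m n p q : Fin 7) : psi0 m n p q = ((psiv m n p q : ℤ) : ℝ) := by
  rw [psi0_expand, ← Z8 m n p q]
  unfold psi6
  push_cast [eps7_cast]
  ring

/-! ### Real-level contraction identities -/

lemma phi12 (a b c : Fin 7) : phi0 b a c = - phi0 a b c := by
  rw [phi_cast, phi_cast]; exact_mod_cast congrArg (fun z : ℤ => (z : ℝ)) (Z1 a b c)

lemma phi23 (a b c : Fin 7) : phi0 a c b = - phi0 a b c := by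
  rw [phi_cast, phi_cast]; exact_mod_cast congrArg (fun z : ℤ => (z : ℝ)) (Z2 a b c)

lemma R3' : (∑ a, ∑ b, ∑ c, phi0 a b c * phi0 a b c) = 42 := by
  simp only [phi_cast]
  exact_mod_cast congrArg (fun z : ℤ => (z : ℝ)) Z3

lemma R4 (e d : Fin 7) : (∑ b, ∑ c, phi0 e b c * phi0 d b c) = 6 * kd e d := by
  simp only [phi_cast, kd_cast]
  exact_mod_cast congrArg (fun z : ℤ => (z : ℝ)) (Z4 e d)

lemma R5 (a d b e : Fin 7) :
    (∑ c, phi0 a e c * phi0 d b c) + (∑ c, phi0 d e c * phi0 a b c)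
      + (∑ c, phi0 a b c * phi0 d e c) + (∑ c, phi0 d b c * phi0 a e c)
    = -2 * kd a b * kd d e - 2 * kd a e * kd d b + 4 * kd a d * kd b e := by
  simp only [phi_cast, kd_cast]
  exact_mod_cast congrArg (fun z : ℤ => (z : ℝ)) (Z5 a d b e)

lemma R6 (a d c e : Fin 7) :
    (∑ b, phi0 a b e * phi0 d b c) + (∑ b, phi0 d b e * phi0 a b c)
      + (∑ b, phi0 a b c * phi0 d b e) + (∑ b, phi0 d b c * phi0 a b e)
    = -2 * kd a c * kd d e - 2 * kd a e * kd d c + 4 * kd a d * kd c e := by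
  simp only [phi_cast, kd_cast]
  exact_mod_cast congrArg (fun z : ℤ => (z : ℝ)) (Z6 a d c e)

lemma R7 (d e : Fin 7) :
    (∑ a, ∑ b, ∑ c, ((psiv d a b c : ℤ) : ℝ) * ((psiv e a b c : ℤ) : ℝ)) = 24 * kd d e := by
  simp only [kd_cast]
  exact_mod_cast congrArg (fun z : ℤ => (z : ℝ)) (Z7 d e)

/-! ### Sum-manipulation helpers -/

lemma move2 (f : Fin 7 → Fin 7 → Fin 7 → ℝ) :
    (∑ c, ∑ d, ∑ e, f c d e) = ∑ d, ∑ e, ∑ c, f c d e := by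
  rw [Finset.sum_comm]
  exact Finset.sum_congr rfl fun d _ => Finset.sum_comm

lemma move_in_out (f : Fin 7 → Fin 7 → Fin 7 → ℝ) :
    (∑ b, ∑ c, ∑ d, f b c d) = ∑ d, ∑ b, ∑ c, f b c d := by
  have : (∑ b, ∑ c, ∑ d, f b c d) = ∑ b, ∑ d, ∑ c, f b c d :=
    Finset.sum_congr rfl fun b _ => Finset.sum_comm
  rw [this]
  exact Finset.sum_comm

lemma sum_comm5 (f : Fin 7 → Fin 7 → Fin 7 → Fin 7 → Fin 7 → ℝ) :
    (∑ a, ∑ b, ∑ c, ∑ d, ∑ e, f a b c d e) = ∑ d, ∑ e, ∑ a, ∑ b, ∑ c, f a b c d e := by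
  have h1 : ∀ a, (∑ b, ∑ c, ∑ d, ∑ e, f a b c d e) = ∑ d, ∑ e, ∑ b, ∑ c, f a b c d e := by
    intro a
    have : (∑ b, ∑ c, ∑ d, ∑ e, f a b c d e) = ∑ b, ∑ d, ∑ e, ∑ c, f a b c d e :=
      Finset.sum_congr rfl fun b _ => move2 _
    rw [this]
    exact move2 _
  simp only [h1]
  exact move2 _

lemma sum_kd (f : Fin 7 → ℝ) (y : Fin 7) : (∑ x, f x * kd x y) = f y := by
  unfold kd
  simp [mul_ite, Finset.sum_ite_eq']

lemma sum_kd' (f : Fin 7 → ℝ) (y : Fin 7) : (∑ x, f x * kd y x) = f y := by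
  unfold kd
  simp [mul_ite, Finset.sum_ite_eq]

lemma kd_symm (a b : Fin 7) : kd a b = kd b a := by
  unfold kd
  split_ifs with h1 h2
  · rfl
  · exact absurd h1.symm h2
  · exact absurd ‹b = a›.symm h1
  · rfl

lemma kd_diag (a : Fin 7) : kd a a = 1 := by unfold kd; simp

/-! ### The `27`-part machinery -/

noncomputable def tfun (h : Matrix (Fin 7) (Fin 7) ℝ) (a b c : Fin 7) : ℝ :=
  ∑ d, (h a d * phi0 d b c + h b d * phi0 a d c + h c d * phi0 a b d)

variable {h : Matrix (Fin 7) (Fin 7) ℝ}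

lemma t12 (a b c : Fin 7) : tfun h b a c = - tfun h a b c := by
  unfold tfun
  rw [← Finset.sum_neg_distrib]
  refine Finset.sum_congr rfl fun d _ => ?_
  rw [phi12 a d c, phi12 d b c, phi12 a b d]
  ring

lemma t23 (a b c : Fin 7) : tfun h a c b = - tfun h a b c := by
  unfold tfun
  rw [← Finset.sum_neg_distrib]
  refine Finset.sum_congr rfl fun d _ => ?_
  rw [phi23 d b c, phi23 a d c, phi23 a b d]
  ring

lemma tdecomp (a b c : Fin 7) :
    tfun h a b c = (∑ d, h a d * phi0 d b c) + (∑ d, h b d * phi0 a d c)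
      + (∑ d, h c d * phi0 a b d) := by
  unfold tfun
  rw [Finset.sum_add_distrib, Finset.sum_add_distrib]

-- Σ t·Q = Σ t·P
lemma tQP :
    (∑ a, ∑ b, ∑ c, tfun h a b c * (∑ d, h b d * phi0 a d c))
      = ∑ a, ∑ b, ∑ c, tfun h a b c * (∑ d, h a d * phi0 d b c) := by
  rw [Finset.sum_comm]
  refine Finset.sum_congr rfl fun x _ => Finset.sum_congr rfl fun y _ =>
    Finset.sum_congr rfl fun c _ => ?_
  rw [t12 x y c]
  rw [show (∑ d, h x d * phi0 y d c) = - ∑ d, h x d * phi0 d y c from by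
    rw [← Finset.sum_neg_distrib]
    exact Finset.sum_congr rfl fun d _ => by rw [phi12 d y c]; ring]
  ring

-- Σ t·R = Σ t·Q
lemma tRQ :
    (∑ a, ∑ b, ∑ c, tfun h a b c * (∑ d, h c d * phi0 a b d))
      = ∑ a, ∑ b, ∑ c, tfun h a b c * (∑ d, h b d * phi0 a d c) := by
  refine Finset.sum_congr rfl fun a _ => ?_
  rw [Finset.sum_comm]
  refine Finset.sum_congr rfl fun x _ => Finset.sum_congr rfl fun y _ => ?_
  rw [t23 a x y]
  rw [show (∑ d, h x d * phi0 a y d) = - ∑ d, h x d * phi0 a d y from by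
    rw [← Finset.sum_neg_distrib]
    exact Finset.sum_congr rfl fun d _ => by rw [phi23 a d y]; ring]
  ring

lemma tsq :
    (∑ a, ∑ b, ∑ c, tfun h a b c * tfun h a b c)
      = 3 * ∑ a, ∑ b, ∑ c, tfun h a b c * (∑ d, h a d * phi0 d b c) := by
  have e1 : ∀ a b c : Fin 7, tfun h a b c * tfun h a b c
      = tfun h a b c * (∑ d, h a d * phi0 d b c) + tfun h a b c * (∑ d, h b d * phi0 a d c)
        + tfun h a b c * (∑ d, h c d * phi0 a b d) := by
    intro a b c
    conv_lhs => rw [show tfun h a b c * tfun h a b c = tfun h a b c * ((∑ d, h a d * phi0 d b c)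
      + (∑ d, h b d * phi0 a d c) + (∑ d, h c d * phi0 a b d)) from by rw [← tdecomp]]
    ring
  simp only [e1, Finset.sum_add_distrib]
  rw [tQP, tRQ, tQP]
  ring

-- Step C+D: Σ t·P = Σ_a Σ_d h a d * U a d with U expanded
lemma tP_eq :
    (∑ a, ∑ b, ∑ c, tfun h a b c * (∑ d, h a d * phi0 d b c))
      = ∑ a, ∑ d, h a d * (∑ b, ∑ c, tfun h a b c * phi0 d b c) := by
  refine Finset.sum_congr rfl fun a _ => ?_
  have e1 : ∀ b c : Fin 7, tfun h a b c * (∑ d, h a d * phi0 d b c)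
      = ∑ d, h a d * (tfun h a b c * phi0 d b c) := by
    intro b c
    rw [Finset.mul_sum]
    exact Finset.sum_congr rfl fun d _ => by ring
  simp only [e1]
  rw [move_in_out]
  exact Finset.sum_congr rfl fun d _ => by simp only [Finset.mul_sum]

-- U decomposition
lemma U_eq (a d : Fin 7) :
    (∑ b, ∑ c, tfun h a b c * phi0 d b c)
      = 6 * h a d + (∑ b, ∑ e, h b e * (∑ c, phi0 a e c * phi0 d b c))
        + (∑ c, ∑ e, h c e * (∑ b, phi0 a b e * phi0 d b c)) := by
  have e1 : ∀ b c : Fin 7, tfun h a b c * phi0 d b c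
      = (∑ e, h a e * (phi0 e b c * phi0 d b c)) + (∑ e, h b e * (phi0 a e c * phi0 d b c))
        + (∑ e, h c e * (phi0 a b e * phi0 d b c)) := by
    intro b c
    rw [tdecomp]
    rw [add_mul, add_mul, Finset.sum_mul, Finset.sum_mul, Finset.sum_mul]
    congr 1
    · congr 1
      · exact Finset.sum_congr rfl fun e _ => by ring
      · exact Finset.sum_congr rfl fun e _ => by ring
    · exact Finset.sum_congr rfl fun e _ => by ring
  simp only [e1, Finset.sum_add_distrib]
  congr 1
  · congr 1
    -- T1 = 6 h a d
    · rw [move_in_out (fun b c e => h a e * (phi0 e b c * phi0 d b c))]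
      have : ∀ e, (∑ b, ∑ c, h a e * (phi0 e b c * phi0 d b c))
          = h a e * (6 * kd e d) := by
        intro e
        rw [show (∑ b, ∑ c, h a e * (phi0 e b c * phi0 d b c))
            = h a e * ∑ b, ∑ c, phi0 e b c * phi0 d b c from by
          rw [Finset.mul_sum]
          exact Finset.sum_congr rfl fun b _ => by rw [Finset.mul_sum]]
        rw [R4]
      simp only [this]
      rw [show (∑ e, h a e * (6 * kd e d)) = ∑ e, (6 * h a e) * kd e d from
        Finset.sum_congr rfl fun e _ => by ring]
      rw [sum_kd (fun e => 6 * h a e) d]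
    -- T2
    · refine Finset.sum_congr rfl fun b _ => ?_
      rw [Finset.sum_comm]
      simp only [Finset.mul_sum]
  -- T3
  · rw [Finset.sum_comm]
    refine Finset.sum_congr rfl fun c _ => ?_
    rw [Finset.sum_comm]
    simp only [Finset.mul_sum]


lemma cross_contract (hsym : ∀ a b, h a b = h b a) (htr : (∑ a, h a a) = 0)
    (F : Fin 7 → Fin 7 → Fin 7 → Fin 7 → ℝ)
    (hF : ∀ a d b e, F a e d b + F d e a b + F a b d e + F d b a e
        = -2*kd a b*kd d e - 2*kd a e*kd d b + 4*kd a d*kd b e) :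
    (∑ a, ∑ d, ∑ b, ∑ e, h a d * (h b e * F a e d b)) = - ∑ a, ∑ b, h a b * h a b := by
  have hswap1 : (∑ a, ∑ d, ∑ b, ∑ e, h a d * (h b e * F d e a b))
      = ∑ a, ∑ d, ∑ b, ∑ e, h a d * (h b e * F a e d b) := by
    rw [Finset.sum_comm]
    refine Finset.sum_congr rfl fun x _ => Finset.sum_congr rfl fun y _ =>
      Finset.sum_congr rfl fun b _ => Finset.sum_congr rfl fun e _ => ?_
    rw [hsym y x]
  have hswap2 : (∑ a, ∑ d, ∑ b, ∑ e, h a d * (h b e * F a b d e))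
      = ∑ a, ∑ d, ∑ b, ∑ e, h a d * (h b e * F a e d b) := by
    refine Finset.sum_congr rfl fun a _ => Finset.sum_congr rfl fun d _ => ?_
    rw [Finset.sum_comm]
    refine Finset.sum_congr rfl fun u _ => Finset.sum_congr rfl fun w _ => ?_
    rw [hsym w u]
  have hswap3 : (∑ a, ∑ d, ∑ b, ∑ e, h a d * (h b e * F d b a e))
      = ∑ a, ∑ d, ∑ b, ∑ e, h a d * (h b e * F a e d b) := by
    rw [Finset.sum_comm]
    refine Finset.sum_congr rfl fun x _ => Finset.sum_congr rfl fun y _ => ?_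
    rw [Finset.sum_comm]
    refine Finset.sum_congr rfl fun u _ => Finset.sum_congr rfl fun w _ => ?_
    rw [hsym y x, hsym w u]
  have h4 : (∑ a, ∑ d, ∑ b, ∑ e, h a d * (h b e * F a e d b))
        + (∑ a, ∑ d, ∑ b, ∑ e, h a d * (h b e * F d e a b))
        + (∑ a, ∑ d, ∑ b, ∑ e, h a d * (h b e * F a b d e))
        + (∑ a, ∑ d, ∑ b, ∑ e, h a d * (h b e * F d b a e))
      = ∑ a, ∑ d, ∑ b, ∑ e, h a d * (h b e *
          (-2*kd a b*kd d e - 2*kd a e*kd d b + 4*kd a d*kd b e)) := by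
    simp only [← Finset.sum_add_distrib]
    refine Finset.sum_congr rfl fun a _ => Finset.sum_congr rfl fun d _ =>
      Finset.sum_congr rfl fun b _ => Finset.sum_congr rfl fun e _ => ?_
    rw [← hF a d b e]
    ring
  have hcontract : (∑ a, ∑ d, ∑ b, ∑ e, h a d * (h b e *
        (-2*kd a b*kd d e - 2*kd a e*kd d b + 4*kd a d*kd b e)))
      = -4 * ∑ a, ∑ b, h a b * h a b := by
    have inner_e : ∀ a d b : Fin 7, (∑ e, h a d * (h b e *
          (-2*kd a b*kd d e - 2*kd a e*kd d b + 4*kd a d*kd b e)))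
        = (-2 * (h a d * h b d)) * kd a b + (-2 * (h a d * h b a)) * kd d b
            + (4 * (h a d * kd a d)) * h b b := by
      intro a d b
      have expand : ∀ e : Fin 7, h a d * (h b e *
            (-2*kd a b*kd d e - 2*kd a e*kd d b + 4*kd a d*kd b e))
          = (-2 * (h a d * h b e) * kd a b) * kd d e
            + (-2 * (h a d * h b e) * kd d b) * kd a e
            + (4 * (h a d * h b e) * kd a d) * kd b e := by
        intro e; ring
      simp only [expand, Finset.sum_add_distrib]
      rw [sum_kd' (fun e => -2 * (h a d * h b e) * kd a b) d,
          sum_kd' (fun e => -2 * (h a d * h b e) * kd d b) a,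
          sum_kd' (fun e => 4 * (h a d * h b e) * kd a d) b]
      ring
    simp only [inner_e]
    have inner_b : ∀ a d : Fin 7, (∑ b, ((-2 * (h a d * h b d)) * kd a b
          + (-2 * (h a d * h b a)) * kd d b + (4 * (h a d * kd a d)) * h b b))
        = -4 * (h a d * h a d) := by
      intro a d
      simp only [Finset.sum_add_distrib]
      rw [sum_kd' (fun b => -2 * (h a d * h b d)) a,
          sum_kd' (fun b => -2 * (h a d * h b a)) d]
      rw [← Finset.mul_sum, htr]
      rw [hsym d a]
      ring
    simp only [inner_b]
    simp only [← Finset.mul_sum]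
  linarith [h4, hcontract, hswap1, hswap2, hswap3]

lemma main3 (hsym : ∀ a b, h a b = h b a) (htr : (∑ a, h a a) = 0) :
    (∑ a, ∑ b, ∑ c, tfun h a b c * tfun h a b c) = 12 * ∑ a, ∑ b, h a b * h a b := by
  rw [tsq, tP_eq]
  have hU : ∀ a d : Fin 7, h a d * (∑ b, ∑ c, tfun h a b c * phi0 d b c)
      = 6 * (h a d * h a d)
        + (∑ b, ∑ e, h a d * (h b e * (∑ c, phi0 a e c * phi0 d b c)))
        + (∑ c, ∑ e, h a d * (h c e * (∑ b, phi0 a b e * phi0 d b c))) := by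
    intro a d
    rw [U_eq a d]
    simp only [mul_add, Finset.mul_sum]
    ring
  simp only [hU, Finset.sum_add_distrib]
  have hX : (∑ a, ∑ d, ∑ b, ∑ e, h a d * (h b e * (∑ c, phi0 a e c * phi0 d b c)))
      = - ∑ a, ∑ b, h a b * h a b :=
    cross_contract hsym htr (fun a e d b => ∑ c, phi0 a e c * phi0 d b c)
      (fun a d b e => R5 a d b e)
  have hY : (∑ a, ∑ d, ∑ c, ∑ e, h a d * (h c e * (∑ b, phi0 a b e * phi0 d b c)))
      = - ∑ a, ∑ b, h a b * h a b :=
    cross_contract hsym htr (fun a e d c => ∑ b, phi0 a b e * phi0 d b c)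
      (fun a d c e => R6 a d c e)
  rw [hX, hY]
  have h6 : (∑ a, ∑ d, 6 * (h a d * h a d)) = 6 * ∑ a, ∑ b, h a b * h a b := by
    simp only [← Finset.mul_sum]
  rw [h6]
  ring

/-! ### The main theorem -/

/-- With the projection data `a`, `ω`, `h` of a totally antisymmetric
3-tensor `χ` on `ℝ⁷` and the norm `|ξ|² = (1/6) Σ_{a,b,c} (ξ_{abc})²` on 3-tensors, the
projections satisfy `|π₁(χ)|² = |a φ₀|² = 7 a²`, `|π₇(χ)|² = |ω ⌟ ψ₀|² = 4 |ω|²` and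
`|π₂₇(χ)|² = |i_φ(h)|² = (2/9) |h|²`. -/
theorem lambda3_projection_norms (χ : Fin 7 → Fin 7 → Fin 7 → ℝ)
    (hχ₁ : ∀ a b c, χ a b c = -χ b a c) (hχ₂ : ∀ a b c, χ a b c = -χ a c b)
    (A : ℝ) (hA : A = (1 / 42 : ℝ) * ∑ a, ∑ b, ∑ c, χ a b c * phi0 a b c)
    (ω : Fin 7 → ℝ)
    (hω : ∀ a, ω a = -(1 / 24 : ℝ) * ∑ m, ∑ n, ∑ p, χ m n p * psi0 m n p a)
    (h : Matrix (Fin 7) (Fin 7) ℝ)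
    (hh : ∀ a b, h a b = (3 / 4 : ℝ) *
      ((1 / 2 : ℝ) * ((∑ m, ∑ n, χ m n a * phi0 b m n) + ∑ m, ∑ n, χ m n b * phi0 a m n)
        - (1 / 7 : ℝ) * kd a b * ∑ m, ∑ n, ∑ c, χ m n c * phi0 c m n)) :
    ((1 / 6 : ℝ) * ∑ a, ∑ b, ∑ c, (A * phi0 a b c) ^ 2) = 7 * A ^ 2 ∧
    ((1 / 6 : ℝ) * ∑ a, ∑ b, ∑ c, (∑ d, ω d * psi0 d a b c) ^ 2) = 4 * ∑ a, (ω a) ^ 2 ∧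
    ((1 / 6 : ℝ) * ∑ a, ∑ b, ∑ c, (iphi h a b c) ^ 2) = (2 / 9 : ℝ) * ∑ a, ∑ b, (h a b) ^ 2 := by
  refine ⟨?_, ?_, ?_⟩
  · -- the 1-dimensional part
    have e : ∀ a b c : Fin 7, (A * phi0 a b c) ^ 2 = A ^ 2 * (phi0 a b c * phi0 a b c) :=
      fun a b c => by ring
    simp only [e, ← Finset.mul_sum]
    rw [R3']
    ring
  · -- the 7-dimensional part
    have e : ∀ a b c : Fin 7, (∑ d, ω d * psi0 d a b c) ^ 2
        = ∑ d, ∑ e, ω d * ω e * (psi0 d a b c * psi0 e a b c) := by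
      intro a b c
      rw [sq, Finset.sum_mul_sum]
      exact Finset.sum_congr rfl fun d _ => Finset.sum_congr rfl fun e _ => by ring
    simp only [e]
    rw [sum_comm5 (fun a b c d e => ω d * ω e * (psi0 d a b c * psi0 e a b c))]
    have inner : ∀ d e : Fin 7, (∑ a, ∑ b, ∑ c, ω d * ω e * (psi0 d a b c * psi0 e a b c))
        = ω d * ω e * (24 * kd d e) := by
      intro d e
      rw [show (∑ a, ∑ b, ∑ c, ω d * ω e * (psi0 d a b c * psi0 e a b c))
          = ω d * ω e * ∑ a, ∑ b, ∑ c, psi0 d a b c * psi0 e a b c from by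
        simp only [Finset.mul_sum]]
      rw [show (∑ a, ∑ b, ∑ c, psi0 d a b c * psi0 e a b c) = 24 * kd d e from by
        simp only [psi_cast]; exact R7 d e]
    simp only [inner]
    have inner2 : ∀ d : Fin 7, (∑ e, ω d * ω e * (24 * kd d e)) = 24 * (ω d) ^ 2 := by
      intro d
      rw [show (∑ e, ω d * ω e * (24 * kd d e)) = ∑ e, (24 * (ω d * ω e)) * kd d e from
        Finset.sum_congr rfl fun e _ => by ring]
      rw [sum_kd' (fun e => 24 * (ω d * ω e)) d]
      ring
    simp only [inner2]
    rw [← Finset.mul_sum]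
    ring
  · -- the 27-dimensional part
    have hsym : ∀ a b, h a b = h b a := by
      intro a b
      rw [hh a b, hh b a, kd_symm b a]
      ring
    have htr : (∑ a, h a a) = 0 := by
      simp only [hh, kd_diag]
      have e : ∀ a : Fin 7, (3 / 4 : ℝ) *
          ((1 / 2 : ℝ) * ((∑ m, ∑ n, χ m n a * phi0 a m n) + ∑ m, ∑ n, χ m n a * phi0 a m n)
            - (1 / 7 : ℝ) * 1 * ∑ m, ∑ n, ∑ c, χ m n c * phi0 c m n)
          = (3 / 4 : ℝ) * (∑ m, ∑ n, χ m n a * phi0 a m n)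
            - (3 / 28 : ℝ) * ∑ m, ∑ n, ∑ c, χ m n c * phi0 c m n := fun a => by ring
      simp only [e]
      rw [Finset.sum_sub_distrib]
      simp only [← Finset.mul_sum]
      rw [move2 (fun a m n => χ m n a * phi0 a m n)]
      rw [Finset.sum_const, Finset.card_univ]
      simp only [Fintype.card_fin, nsmul_eq_mul]
      push_cast
      ring
    have e : ∀ a b c : Fin 7, (iphi h a b c) ^ 2
        = (1 / 9 : ℝ) * (tfun h a b c * tfun h a b c) := by
      intro a b c
      have : iphi h a b c = (1 / 3 : ℝ) * tfun h a b c := rfl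
      rw [this]; ring
    simp only [e, ← Finset.mul_sum]
    rw [main3 hsym htr]
    ring
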